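/- The function h(x) = (e^{−x} − 1 + x)/(1 − e^{−x})² is strictly increasing on (0, ∞). -/

import Mathlib

open Real Set

lemma mme_key (x : ℝ) (hx : 0 < x) :
    0 < 1 - Real.exp (-x) ^ 2 - 2 * Real.exp (-x) * x := by
  have h := Real.self_lt_sinh_iff.mpr hx
  rw [Real.sinh_eq] at h
  have h1 : Real.exp x * Real.exp (-x) = 1 := by
    rw [← Real.exp_add]; simp
  nlinarith [Real.exp_pos x, Real.exp_pos (-x)]

lemma mme_hasDerivAt (x : ℝ) (hx : 0 < x) :
    HasDerivAt (fun x : ℝ => (Real.exp (-x) - 1 + x) / (1 - Real.exp (-x)) ^ 2)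
      (((1 - Real.exp (-x)) * (1 - Real.exp (-x)) ^ 2
        - (Real.exp (-x) - 1 + x) * (2 * (1 - Real.exp (-x)) * Real.exp (-x)))
        / ((1 - Real.exp (-x)) ^ 2) ^ 2) x := by
  have hu : Real.exp (-x) < 1 := by
    rw [Real.exp_lt_one_iff]; linarith
  have hne : (1 - Real.exp (-x)) ^ 2 ≠ 0 := by
    have : (0:ℝ) < 1 - Real.exp (-x) := by linarith
    positivity
  have he : HasDerivAt (fun x : ℝ => Real.exp (-x)) (-Real.exp (-x)) x := by
    simpa [Function.comp_def] using (Real.hasDerivAt_exp (-x)).comp x ((hasDerivAt_id x).neg)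
  have hN : HasDerivAt (fun x : ℝ => Real.exp (-x) - 1 + x) (1 - Real.exp (-x)) x := by
    have : HasDerivAt (fun x : ℝ => Real.exp (-x) - 1 + x) (-Real.exp (-x) + 1) x := (he.sub_const 1).add (hasDerivAt_id x)
    convert this using 1; ring
  have hD : HasDerivAt (fun x : ℝ => (1 - Real.exp (-x)) ^ 2)
      (2 * (1 - Real.exp (-x)) * Real.exp (-x)) x := by
    have : HasDerivAt (fun x : ℝ => (1 - Real.exp (-x)) ^ 2) (((2:ℕ):ℝ) * (1 - Real.exp (-x)) ^ (2 - 1) * (0 - -Real.exp (-x))) x := ((hasDerivAt_const x (1:ℝ)).sub he).pow 2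
    convert this using 1; norm_num
  exact hN.div hD hne

theorem strictMonoOn_mme_link_af :
    StrictMonoOn (fun x : ℝ => (Real.exp (-x) - 1 + x) / (1 - Real.exp (-x)) ^ 2)
      (Set.Ioi (0 : ℝ)) := by
  apply strictMonoOn_of_deriv_pos (convex_Ioi 0)
  · apply ContinuousOn.div
    · fun_prop
    · fun_prop
    · intro x hx
      have hu : Real.exp (-x) < 1 := by
        rw [Real.exp_lt_one_iff]; simpa using hx
      have : (0:ℝ) < 1 - Real.exp (-x) := by linarith
      positivity
  · intro x hx
    rw [interior_Ioi] at hx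
    have hx' : 0 < x := hx
    rw [(mme_hasDerivAt x hx').deriv]
    have hu : Real.exp (-x) < 1 := by rw [Real.exp_lt_one_iff]; linarith
    have hu0 : 0 < Real.exp (-x) := Real.exp_pos _
    have hkey := mme_key x hx'
    apply div_pos
    · nlinarith
    · have : (0:ℝ) < 1 - Real.exp (-x) := by linarith
      positivity
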